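/- Let d = 1 and define T: L²(ℝ) ∩ L^∞(ℝ) → L²(ℝ) ∩ L^∞(ℝ) by Tf := (∫₀¹ f(t) dt)·χ_{[0,1]}. Then (i) ∥Tf∥₂ ≤ ∥f∥₂ and ∥Tf∥_∞ ≤ ∥f∥_∞ for every f ∈ 𝒜; yet (ii) for every λ ∈ (0, 1/2) and every c > 0, taking f₁ := λχ_{[0,1/2]} and f₂ := λχ_{[0,1]} (so that Tf₁ = (λ/2)χ_{[0,1]} and Tf₂ = λχ_{[0,1]}), the 2×2 matrix A − B, where A := (K(f_i,f_j))_{ij} = [[(1−4λ²)^{−c/4}, (1−4λ²)^{−c/4}], [(1−4λ²)^{−c/4}, (1−4λ²)^{−c/2}]] and B := (K(Tf_i,Tf_j))_{ij} = [[(1−λ²)^{−c/2}, (1−2λ²)^{−c/2}], [(1−2λ²)^{−c/2}, (1−4λ²)^{−c/2}]], satisfies det(A − B) ≤ 0 and A − B is not positive semidefinite. (Hence, although T is a contraction on both L² and L^∞, its quadratic second quantization Γ₂(T) is not a contraction.) -/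

import Mathlib

open MeasureTheory Complex Finset
open scoped Nat ENNReal

noncomputable section

/-- Membership in `𝒜 = L²(ℝ) ∩ L^∞(ℝ)`. -/
def MemA1 (f : ℝ → ℂ) : Prop :=
  MemLp f 2 (volume : Measure ℝ) ∧ MemLp f ⊤ (volume : Measure ℝ)

/-- `K(f,g) = ⟨Ψ(f),Ψ(g)⟩`, the inner product of quadratic exponential vectors (d = 1). -/
def Kker1 (c : ℝ) (f g : ℝ → ℂ) : ℂ :=
  Complex.exp (-(c / 2 : ℂ) *
    ∫ x : ℝ, Complex.log (1 - 4 * (starRingEnd ℂ) (f x) * g x))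

lemma log_indicator_eq (S T : Set ℝ) (a b : ℝ) (x : ℝ) :
    Complex.log (1 - 4 * (starRingEnd ℂ) ((a:ℂ) * Set.indicator S (fun _ => (1:ℂ)) x) *
      ((b:ℂ) * Set.indicator T (fun _ => (1:ℂ)) x))
    = Set.indicator (S ∩ T) (fun _ => Complex.log (1 - 4*(a:ℂ)*b)) x := by
  by_cases hx : x ∈ S <;> by_cases hy : x ∈ T <;>
    simp [Set.indicator_of_mem, Set.indicator_of_notMem, hx, hy, Set.mem_inter_iff,
      Complex.conj_ofReal, mul_comm]

lemma exp_mul_log_ofReal (r e : ℝ) (hr : 0 < r) :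
    Complex.exp ((e:ℂ) * Complex.log (r:ℂ)) = ((r ^ e : ℝ) : ℂ) := by
  rw [← Complex.ofReal_log hr.le, ← Complex.ofReal_mul, ← Complex.ofReal_exp,
    Real.rpow_def_of_pos hr, mul_comm]

lemma Kker1_indicator (c a b : ℝ) (S T : Set ℝ) (hST : MeasurableSet (S ∩ T))
    (h : 0 < 1 - 4*a*b) :
    Kker1 c (fun x => (a:ℂ) * Set.indicator S (fun _ => (1:ℂ)) x)
        (fun x => (b:ℂ) * Set.indicator T (fun _ => (1:ℂ)) x)
      = (((1 - 4*a*b) ^ (-(c/2) * (volume (S∩T)).toReal) : ℝ) : ℂ) := by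
  unfold Kker1
  have h1 : (∫ x : ℝ, Complex.log (1 - 4 * (starRingEnd ℂ)
        ((a:ℂ) * Set.indicator S (fun _ => (1:ℂ)) x) *
        ((b:ℂ) * Set.indicator T (fun _ => (1:ℂ)) x)))
      = ((volume (S∩T)).toReal : ℂ) * Complex.log (((1 - 4*a*b : ℝ) : ℂ)) := by
    simp_rw [log_indicator_eq S T a b]
    rw [integral_indicator_const _ hST, real_smul, measureReal_def]
    push_cast
    ring_nf
  rw [h1, show -(c/2 : ℂ) * (((volume (S∩T)).toReal : ℂ) * Complex.log (((1 - 4*a*b : ℝ) : ℂ)))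
      = ((-(c/2) * (volume (S∩T)).toReal : ℝ) : ℂ) * Complex.log (((1 - 4*a*b : ℝ) : ℂ)) by
        push_cast; ring,
    exp_mul_log_ofReal _ _ h]

lemma Kker1_Icc (c a b p q : ℝ) (hp : 0 ≤ p) (hq : 0 ≤ q) (h : 0 < 1 - 4*a*b) :
    Kker1 c (fun x => (a:ℂ) * Set.indicator (Set.Icc (0:ℝ) p) (fun _ => (1:ℂ)) x)
        (fun x => (b:ℂ) * Set.indicator (Set.Icc (0:ℝ) q) (fun _ => (1:ℂ)) x)
      = (((1 - 4*a*b) ^ (-(c/2) * min p q) : ℝ) : ℂ) := by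
  rw [Kker1_indicator c a b _ _ (measurableSet_Icc.inter measurableSet_Icc) h,
    Set.Icc_inter_Icc, max_self, Real.volume_Icc, sub_zero,
    ENNReal.toReal_ofReal (le_min hp hq)]

set_option maxHeartbeats 1000000 in
/-- the counterexample of the paper: `Tf := (∫₀¹ f)·χ_{[0,1]}` is a
contraction of both `L²(ℝ)` and `L^∞(ℝ)`, yet with `f₁ = λχ_{[0,1/2]}`, `f₂ = λχ_{[0,1]}`
(`0 < λ < 1/2`) one has `Tf₁ = (λ/2)χ_{[0,1]}`, `Tf₂ = λχ_{[0,1]}`, the Gram matrices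
`A = (K(f_i,f_j))`, `B = (K(Tf_i,Tf_j))` are the explicit matrices below, and
`det(A − B) ≤ 0` with `A − B` not positive semidefinite: `Γ₂(T)` is not a contraction. -/
theorem statement19 (c : ℝ) (hc : 0 < c)
    (lam : ℝ) (hlam0 : 0 < lam) (hlam : lam < 1 / 2)
    (T : (ℝ → ℂ) → (ℝ → ℂ))
    (hT : T = fun f x =>
      (∫ t in (0:ℝ)..1, f t) * Set.indicator (Set.Icc (0:ℝ) 1) (fun _ => (1:ℂ)) x)
    (f₁ f₂ : ℝ → ℂ)
    (hf₁ : f₁ = fun x => (lam : ℂ) * Set.indicator (Set.Icc (0:ℝ) (1/2)) (fun _ => (1:ℂ)) x)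
    (hf₂ : f₂ = fun x => (lam : ℂ) * Set.indicator (Set.Icc (0:ℝ) 1) (fun _ => (1:ℂ)) x)
    (A B : Matrix (Fin 2) (Fin 2) ℝ)
    (hA : A = !![(1 - 4 * lam ^ 2) ^ (-(c / 4)), (1 - 4 * lam ^ 2) ^ (-(c / 4));
                 (1 - 4 * lam ^ 2) ^ (-(c / 4)), (1 - 4 * lam ^ 2) ^ (-(c / 2))])
    (hB : B = !![(1 - lam ^ 2) ^ (-(c / 2)), (1 - 2 * lam ^ 2) ^ (-(c / 2));
                 (1 - 2 * lam ^ 2) ^ (-(c / 2)), (1 - 4 * lam ^ 2) ^ (-(c / 2))]) :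
    (∀ f, MemA1 f →
      eLpNorm (T f) 2 (volume : Measure ℝ) ≤ eLpNorm f 2 (volume : Measure ℝ) ∧
      eLpNorm (T f) ⊤ (volume : Measure ℝ) ≤ eLpNorm f ⊤ (volume : Measure ℝ)) ∧
    (T f₁ = fun x => ((lam : ℂ) / 2) * Set.indicator (Set.Icc (0:ℝ) 1) (fun _ => (1:ℂ)) x) ∧
    (T f₂ = fun x => (lam : ℂ) * Set.indicator (Set.Icc (0:ℝ) 1) (fun _ => (1:ℂ)) x) ∧
    (Kker1 c f₁ f₁ = (A 0 0 : ℝ) ∧ Kker1 c f₁ f₂ = (A 0 1 : ℝ) ∧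
      Kker1 c f₂ f₁ = (A 1 0 : ℝ) ∧ Kker1 c f₂ f₂ = (A 1 1 : ℝ)) ∧
    (Kker1 c (T f₁) (T f₁) = (B 0 0 : ℝ) ∧ Kker1 c (T f₁) (T f₂) = (B 0 1 : ℝ) ∧
      Kker1 c (T f₂) (T f₁) = (B 1 0 : ℝ) ∧ Kker1 c (T f₂) (T f₂) = (B 1 1 : ℝ)) ∧
    (A - B).det ≤ 0 ∧ ¬ (A - B).PosSemidef := by
  -- positivity facts
  have hl4 : (0:ℝ) < 1 - 4 * lam ^ 2 := by nlinarith
  have hl2 : (0:ℝ) < 1 - 2 * lam ^ 2 := by nlinarith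
  have hl1 : (0:ℝ) < 1 - lam ^ 2 := by nlinarith
  -- the interval integrals
  have hI1 : (∫ t in (0:ℝ)..1,
      (lam : ℂ) * Set.indicator (Set.Icc (0:ℝ) (1/2)) (fun _ => (1:ℂ)) t) = (lam:ℂ)/2 := by
    rw [intervalIntegral.integral_of_le (by norm_num : (0:ℝ) ≤ 1), integral_const_mul,
      integral_indicator measurableSet_Icc, Measure.restrict_restrict measurableSet_Icc]
    have hset : Set.Icc (0:ℝ) (1/2) ∩ Set.Ioc 0 1 = Set.Ioc (0:ℝ) (1/2) := by
      ext x
      simp only [Set.mem_inter_iff, Set.mem_Icc, Set.mem_Ioc]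
      constructor
      · rintro ⟨⟨_, h2⟩, h3, _⟩; exact ⟨h3, h2⟩
      · rintro ⟨h1, h2⟩; exact ⟨⟨h1.le, h2⟩, h1, by linarith⟩
    rw [hset, setIntegral_const, measureReal_def, Real.volume_Ioc]
    norm_num [real_smul]
    ring
  have hI2 : (∫ t in (0:ℝ)..1,
      (lam : ℂ) * Set.indicator (Set.Icc (0:ℝ) 1) (fun _ => (1:ℂ)) t) = (lam:ℂ) := by
    rw [intervalIntegral.integral_of_le (by norm_num : (0:ℝ) ≤ 1), integral_const_mul,
      integral_indicator measurableSet_Icc, Measure.restrict_restrict measurableSet_Icc]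
    have hset : Set.Icc (0:ℝ) 1 ∩ Set.Ioc 0 1 = Set.Ioc (0:ℝ) 1 := by
      rw [Set.inter_eq_right]
      exact Set.Ioc_subset_Icc_self
    rw [hset, setIntegral_const, measureReal_def, Real.volume_Ioc]
    norm_num [real_smul]
  have hT1 : T f₁ = fun x => ((lam : ℂ) / 2) *
      Set.indicator (Set.Icc (0:ℝ) 1) (fun _ => (1:ℂ)) x := by
    subst hT hf₁
    funext x
    simp only []
    rw [hI1]
  have hT2 : T f₂ = fun x => (lam : ℂ) *
      Set.indicator (Set.Icc (0:ℝ) 1) (fun _ => (1:ℂ)) x := by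
    subst hT hf₂
    funext x
    simp only []
    rw [hI2]
  -- contraction property
  have hcontr : ∀ f, MemA1 f →
      eLpNorm (T f) 2 (volume : Measure ℝ) ≤ eLpNorm f 2 (volume : Measure ℝ) ∧
      eLpNorm (T f) ⊤ (volume : Measure ℝ) ≤ eLpNorm f ⊤ (volume : Measure ℝ) := by
    intro f hf
    set μ' : Measure ℝ := volume.restrict (Set.Ioc 0 1) with hμ'
    haveI : IsProbabilityMeasure μ' := ⟨by simp [hμ', Real.volume_Ioc]⟩
    set c₀ : ℂ := ∫ t in (0:ℝ)..1, f t with hc₀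
    have hTf : T f = Set.indicator (Set.Icc (0:ℝ) 1) (fun _ => c₀) := by
      subst hT
      funext x
      by_cases hx : x ∈ Set.Icc (0:ℝ) 1 <;>
        simp [Set.indicator_of_mem, Set.indicator_of_notMem, hx, hc₀]
    have hc₀' : (‖c₀‖₊ : ℝ≥0∞) ≤ ∫⁻ x, ‖f x‖₊ ∂μ' := by
      rw [hc₀, intervalIntegral.integral_of_le (by norm_num : (0:ℝ) ≤ 1)]
      exact enorm_integral_le_lintegral_enorm _
    have hmeas : AEStronglyMeasurable f μ' := hf.1.aestronglyMeasurable.restrict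
    constructor
    · rw [hTf, eLpNorm_indicator_const measurableSet_Icc two_ne_zero ENNReal.ofNat_ne_top]
      have : volume (Set.Icc (0:ℝ) 1) = 1 := by simp [Real.volume_Icc]
      rw [this, ENNReal.one_rpow, mul_one]
      calc (‖c₀‖₊ : ℝ≥0∞) ≤ ∫⁻ x, ‖f x‖₊ ∂μ' := hc₀'
        _ = eLpNorm f 1 μ' := (eLpNorm_one_eq_lintegral_enorm (f := f) (μ := μ')).symm
        _ ≤ eLpNorm f 2 μ' := eLpNorm_le_eLpNorm_of_exponent_le (by norm_num) hmeas
        _ ≤ eLpNorm f 2 volume := eLpNorm_mono_measure f Measure.restrict_le_self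
    · rw [hTf]
      refine le_trans (eLpNorm_indicator_le _) ?_
      have hconst : eLpNorm (fun _ : ℝ => c₀) ⊤ volume = (‖c₀‖₊ : ℝ≥0∞) := by
        have hvol : (volume : Measure ℝ) ≠ 0 := by
          intro h0
          have h1 : (volume : Measure ℝ) (Set.Ioc 0 1) = ENNReal.ofReal (1 - 0) :=
            Real.volume_Ioc
          rw [h0] at h1
          simp at h1
        rw [eLpNorm_exponent_top, eLpNormEssSup_const _ hvol, enorm_eq_nnnorm]
      rw [hconst]
      calc (‖c₀‖₊ : ℝ≥0∞) ≤ ∫⁻ x, ‖f x‖₊ ∂μ' := hc₀'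
        _ = eLpNorm f 1 μ' := (eLpNorm_one_eq_lintegral_enorm (f := f) (μ := μ')).symm
        _ ≤ eLpNorm f ⊤ μ' := eLpNorm_le_eLpNorm_of_exponent_le le_top hmeas
        _ ≤ eLpNorm f ⊤ volume := eLpNorm_mono_measure f Measure.restrict_le_self
  -- K matrix entries
  have hTf1' : T f₁ = fun x => (((lam/2 : ℝ)):ℂ) *
      Set.indicator (Set.Icc (0:ℝ) 1) (fun _ => (1:ℂ)) x := by
    rw [hT1]; push_cast; rfl
  have hKA : Kker1 c f₁ f₁ = ((1 - 4 * lam ^ 2) ^ (-(c / 4)) : ℝ) ∧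
      Kker1 c f₁ f₂ = ((1 - 4 * lam ^ 2) ^ (-(c / 4)) : ℝ) ∧
      Kker1 c f₂ f₁ = ((1 - 4 * lam ^ 2) ^ (-(c / 4)) : ℝ) ∧
      Kker1 c f₂ f₂ = ((1 - 4 * lam ^ 2) ^ (-(c / 2)) : ℝ) := by
    subst hf₁ hf₂
    refine ⟨?_, ?_, ?_, ?_⟩ <;>
      rw [Kker1_Icc c lam lam _ _ (by norm_num) (by norm_num) (by nlinarith)] <;>
      rw [show (1:ℝ) - 4*lam*lam = 1 - 4*lam^2 by ring]
    · rw [show -(c/2) * min (1/2 : ℝ) (1/2) = -(c/4) by norm_num; ring]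
    · rw [show -(c/2) * min (1/2 : ℝ) 1 = -(c/4) by norm_num; ring]
    · rw [show -(c/2) * min (1 : ℝ) (1/2) = -(c/4) by norm_num; ring]
    · rw [show -(c/2) * min (1 : ℝ) 1 = -(c/2) by norm_num]
  have hKB : Kker1 c (T f₁) (T f₁) = ((1 - lam ^ 2) ^ (-(c / 2)) : ℝ) ∧
      Kker1 c (T f₁) (T f₂) = ((1 - 2 * lam ^ 2) ^ (-(c / 2)) : ℝ) ∧
      Kker1 c (T f₂) (T f₁) = ((1 - 2 * lam ^ 2) ^ (-(c / 2)) : ℝ) ∧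
      Kker1 c (T f₂) (T f₂) = ((1 - 4 * lam ^ 2) ^ (-(c / 2)) : ℝ) := by
    rw [hTf1', hT2]
    refine ⟨?_, ?_, ?_, ?_⟩
    · rw [Kker1_Icc c (lam/2) (lam/2) _ _ (by norm_num) (by norm_num) (by nlinarith),
        show (1:ℝ) - 4*(lam/2)*(lam/2) = 1 - lam^2 by ring,
        show -(c/2) * min (1:ℝ) 1 = -(c/2) by norm_num]
    · rw [Kker1_Icc c (lam/2) lam _ _ (by norm_num) (by norm_num) (by nlinarith),
        show (1:ℝ) - 4*(lam/2)*lam = 1 - 2*lam^2 by ring,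
        show -(c/2) * min (1:ℝ) 1 = -(c/2) by norm_num]
    · rw [Kker1_Icc c lam (lam/2) _ _ (by norm_num) (by norm_num) (by nlinarith),
        show (1:ℝ) - 4*lam*(lam/2) = 1 - 2*lam^2 by ring,
        show -(c/2) * min (1:ℝ) 1 = -(c/2) by norm_num]
    · rw [Kker1_Icc c lam lam _ _ (by norm_num) (by norm_num) (by nlinarith),
        show (1:ℝ) - 4*lam*lam = 1 - 4*lam^2 by ring,
        show -(c/2) * min (1:ℝ) 1 = -(c/2) by norm_num]
  -- strict inequality between the off-diagonal terms
  have hb : (1 - 2*lam^2) ^ (-(c/2)) < (1 - 4*lam^2) ^ (-(c/4)) := by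
    have h2 : (1 - 2*lam^2) ^ (-(c/2)) = ((1 - 2*lam^2)^2 : ℝ) ^ (-(c/4)) := by
      rw [← Real.rpow_natCast (1 - 2*lam^2) 2, ← Real.rpow_mul hl2.le]
      congr 1
      push_cast
      ring
    rw [h2]
    refine Real.rpow_lt_rpow_of_neg hl4 ?_ (by linarith)
    nlinarith [pow_pos hlam0 4]
  -- determinant
  have hdet : (A - B).det ≤ 0 := by
    rw [Matrix.det_fin_two]
    simp only [hA, hB, Matrix.sub_apply, Matrix.cons_val', Matrix.cons_val_zero,
      Matrix.cons_val_one, Matrix.head_cons, Matrix.empty_val', Matrix.cons_val_fin_one,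
      Matrix.head_fin_const, Matrix.of_apply]
    nlinarith [sq_nonneg ((1 - 4*lam^2) ^ (-(c/4)) - (1 - 2*lam^2) ^ (-(c/2)))]
  have hnpsd : ¬ (A - B).PosSemidef := by
    intro hpsd
    have hq : ∀ x : ℝ, 0 ≤ ((1-4*lam^2)^(-(c/4)) - (1-lam^2)^(-(c/2)))*x^2
        + 2*((1-4*lam^2)^(-(c/4)) - (1-2*lam^2)^(-(c/2)))*x := by
      intro x
      have key := hpsd.dotProduct_mulVec_nonneg ![x, 1]
      simp only [hA, hB, Matrix.mulVec, dotProduct, Fin.sum_univ_two, Matrix.sub_apply,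
        Matrix.cons_val', Matrix.cons_val_zero, Matrix.cons_val_one, Matrix.head_cons,
        Matrix.empty_val', Matrix.cons_val_fin_one, Matrix.head_fin_const, Matrix.of_apply,
        star_trivial, Pi.star_apply] at key
      exact le_of_le_of_eq key (by ring)
    set b' : ℝ := (1 - 4*lam^2) ^ (-(c/4)) - (1 - 2*lam^2) ^ (-(c/2)) with hb'
    set p : ℝ := (1 - 4*lam^2) ^ (-(c/4)) - (1 - lam^2) ^ (-(c/2)) with hp
    have hb'0 : 0 < b' := by rw [hb']; linarith
    have h1 : 0 ≤ p - 2*b' := (hq (-1)).trans_eq (by ring)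
    have hp0 : 0 < p := by linarith
    have h2 := hq (-(b'/p))
    have hx : p * (b'/p) = b' := mul_div_cancel₀ _ hp0.ne'
    have hx2 : p * (b'/p)^2 = b' * (b'/p) := by rw [pow_two, ← mul_assoc, hx]
    have hu : 0 < b' * (b'/p) := mul_pos hb'0 (div_pos hb'0 hp0)
    have h2' : 0 ≤ p * (b'/p)^2 - 2*b'*(b'/p) := h2.trans_eq (by ring)
    linarith
  refine ⟨hcontr, hT1, hT2, ?_, ?_, hdet, hnpsd⟩
  · simp only [hA, Matrix.cons_val', Matrix.cons_val_zero, Matrix.cons_val_one,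
      Matrix.head_cons, Matrix.empty_val', Matrix.cons_val_fin_one, Matrix.of_apply]
    exact ⟨hKA.1, hKA.2.1, hKA.2.2.1, hKA.2.2.2⟩
  · simp only [hB, Matrix.cons_val', Matrix.cons_val_zero, Matrix.cons_val_one,
      Matrix.head_cons, Matrix.empty_val', Matrix.cons_val_fin_one, Matrix.of_apply]
    exact ⟨hKB.1, hKB.2.1, hKB.2.2.1, hKB.2.2.2⟩
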